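/- As E → −∞ one has J_E/E → max_{r∈[ρ₋,ρ₊]} χ(r) and A_E − log(−E) → A_a, where A_a := max_{r∈[ρ₋,ρ₊]} log χ(r). -/

import Mathlib

open Real MeasureTheory Set Filter Topology Function

noncomputable section

/-- Mobility `χ(a) = a(1−a)`. -/
def chi (a : ℝ) : ℝ := a * (1 - a)

lemma chi_cont : Continuous chi := by unfold chi; fun_prop

lemma chi_sub (a b : ℝ) : chi a - chi b = (a - b) * (1 - a - b) := by unfold chi; ring

lemma chi_min {ρm ρp : ℝ} (h1 : ρm ≤ ρp) {r : ℝ} (hr : r ∈ Set.Icc ρm ρp) :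
    min (chi ρm) (chi ρp) ≤ chi r := by
  obtain ⟨hr1, hr2⟩ := hr
  rcases le_total (1 - r - ρm) 0 with h | h
  · refine le_trans (min_le_right _ _) ?_
    nlinarith [chi_sub r ρp]
  · refine le_trans (min_le_left _ _) ?_
    nlinarith [chi_sub r ρm]

lemma chi_max {ρm ρp : ℝ} (h1 : ρm ≤ ρp) {r : ℝ} (hr : r ∈ Set.Icc ρm ρp) :
    chi r + (r - max ρm (min (1/2) ρp))^2 ≤ chi (max ρm (min (1/2) ρp)) := by
  obtain ⟨hr1, hr2⟩ := hr
  rcases le_total ρp (1/2) with h | h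
  · rw [min_eq_right h, max_eq_right h1]
    nlinarith [chi_sub ρp r]
  · rcases le_total ρm (1/2) with h' | h'
    · rw [min_eq_left h, max_eq_right h']
      nlinarith [chi_sub (1/2) r]
    · rw [min_eq_left h, max_eq_left h']
      nlinarith [chi_sub ρm r]

lemma rstar_mem {ρm ρp : ℝ} (h1 : ρm ≤ ρp) : max ρm (min (1/2) ρp) ∈ Set.Icc ρm ρp :=
  ⟨le_max_left _ _, max_le h1 (min_le_right _ _)⟩

lemma not_int {E Jv r0 ρm ρp : ℝ} (hE : E ≠ 0) (h01 : 0 < r0) (h02 : r0 < 1)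
    (hne : ρm ≠ ρp) (hr0 : r0 ∈ Set.uIcc ρm ρp) (hroot : E * chi r0 = Jv) :
    ¬ IntervalIntegrable (fun r => (E * chi r - Jv)⁻¹) volume ρm ρp := by
  refine not_intervalIntegrable_of_sub_inv_isBigO_punctured ?_ hne hr0
  have hfac : ∀ x : ℝ, E * chi x - Jv = E * ((x - r0) * (1 - x - r0)) := by
    intro x
    rw [← hroot]
    linear_combination E * chi_sub x r0
  have hev1 : ∀ᶠ x in 𝓝[≠] r0, x ≠ 1 - r0 := by
    by_cases h : r0 = 1 - r0
    · filter_upwards [self_mem_nhdsWithin] with x hx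
      rw [← h]; exact hx
    · exact (eventually_ne_nhds (Ne.symm (by exact fun hc => h hc.symm))).filter_mono
        nhdsWithin_le_nhds
  have hev2 : ∀ᶠ x in 𝓝[≠] r0, |x - r0| ≤ 1 := by
    have : ∀ᶠ x in 𝓝 r0, |x - r0| ≤ 1 := by
      filter_upwards [Metric.closedBall_mem_nhds r0 (by norm_num : (0:ℝ) < 1)] with x hx
      simpa [Real.dist_eq] using hx
    exact this.filter_mono nhdsWithin_le_nhds
  rw [Asymptotics.isBigO_iff]
  refine ⟨2 * |E|, ?_⟩
  filter_upwards [self_mem_nhdsWithin, hev1, hev2] with x hx h1x h2x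
  have ht : 0 < |x - r0| := by
    rw [abs_pos, sub_ne_zero]; exact hx
  have hu : 0 < |1 - x - r0| := by
    rw [abs_pos]
    intro hc
    exact h1x (by linarith [sub_eq_zero.mp hc])
  have hu2 : |1 - x - r0| ≤ 2 := by
    have h5 : |1 - x - r0| ≤ |1 - 2*r0| + |r0 - x| := by
      calc |1 - x - r0| = |(1 - 2*r0) + (r0 - x)| := by ring_nf
        _ ≤ _ := abs_add_le _ _
    have h3 : |1 - 2*r0| ≤ 1 := by rw [abs_le]; constructor <;> linarith
    have h4 : |r0 - x| ≤ 1 := by rwa [abs_sub_comm]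
    linarith
  rw [hfac x, norm_inv, norm_inv]
  have hEn : (0:ℝ) < |E| := abs_pos.mpr hE
  rw [norm_eq_abs, norm_eq_abs, abs_mul, abs_mul]
  rw [inv_eq_one_div, inv_eq_one_div, mul_one_div, div_le_div_iff₀ ht (by positivity)]
  nlinarith [mul_le_mul_of_nonneg_left hu2 (le_of_lt ht), mul_pos hEn ht]

lemma keybound {ρm ρp E Jv : ℝ} (h0 : 0 < ρm) (h1 : ρm < ρp) (h2 : ρp < 1)
    (hE : E ≤ -1)
    (hInt : (1/2) * (∫ r in ρm..ρp, (E * chi r - Jv)⁻¹) = 1) :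
    0 < E * chi (max ρm (min (1/2) ρp)) - Jv ∧
      E * chi (max ρm (min (1/2) ρp)) - Jv ≤ (ρp - ρm)/2 := by
  set rs := max ρm (min (1/2) ρp) with hrs
  set M := chi rs with hM
  have hrsmem : rs ∈ Set.Icc ρm ρp := rstar_mem h1.le
  have hEneg : E < 0 := lt_of_le_of_lt hE (by norm_num)
  have hE0 : E ≠ 0 := ne_of_lt hEneg
  have hm : 0 < min (chi ρm) (chi ρp) := by
    apply lt_min <;> unfold chi <;> nlinarith
  set m := min (chi ρm) (chi ρp) with hmdef
  have hmM : m ≤ M := chi_min h1.le hrsmem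
  have hchile : ∀ r ∈ Set.Icc ρm ρp, chi r ≤ M := by
    intro r hr
    nlinarith [chi_max h1.le hr]
  have hint2 : (∫ r in ρm..ρp, (E * chi r - Jv)⁻¹) = 2 := by linarith
  have hlt : Jv < E * M := by
    by_contra hcon
    push_neg at hcon
    by_cases hc : E * m < Jv
    · have hneg : (∫ r in ρm..ρp, (E * chi r - Jv)⁻¹) ≤ 0 := by
        rw [← neg_nonneg, ← intervalIntegral.integral_neg]
        apply intervalIntegral.integral_nonneg h1.le
        intro u hu
        have h5 : E * chi u ≤ E * m :=
          mul_le_mul_of_nonpos_left (chi_min h1.le hu) hEneg.le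
        have h6 : E * chi u - Jv < 0 := by linarith
        simp only [neg_nonneg]
        exact inv_nonpos.mpr h6.le
      linarith
    · push_neg at hc
      have hre : ∃ re ∈ Set.Icc ρm ρp, chi re = m := by
        rcases min_cases (chi ρm) (chi ρp) with ⟨h, _⟩ | ⟨h, _⟩
        · exact ⟨ρm, ⟨le_refl _, h1.le⟩, h.symm⟩
        · exact ⟨ρp, ⟨h1.le, le_refl _⟩, h.symm⟩
      obtain ⟨re, hremem, hrechi⟩ := hre
      have hvm : m ≤ Jv / E := by
        rw [le_div_iff_of_neg hEneg]
        linarith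
      have hvM : Jv / E ≤ M := by
        rw [div_le_iff_of_neg hEneg]
        linarith
      have hmem : Jv / E ∈ Set.uIcc (chi re) (chi rs) := by
        rw [hrechi, ← hM, Set.uIcc_of_le hmM]
        exact ⟨hvm, hvM⟩
      obtain ⟨r0, hr0mem, hr0chi⟩ := intermediate_value_uIcc chi_cont.continuousOn hmem
      have hr0Icc : r0 ∈ Set.Icc ρm ρp := by
        have hsub : Set.uIcc re rs ⊆ Set.Icc ρm ρp := by
          rw [← Set.uIcc_of_le h1.le]
          exact Set.uIcc_subset_uIcc (by rwa [Set.uIcc_of_le h1.le])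
            (by rwa [Set.uIcc_of_le h1.le])
        exact hsub hr0mem
      have hroot : E * chi r0 = Jv := by
        rw [hr0chi]; field_simp
      have hni := not_int hE0 (lt_of_lt_of_le h0 hr0Icc.1) (lt_of_le_of_lt hr0Icc.2 h2)
        (ne_of_lt h1) (by rwa [Set.uIcc_of_le h1.le]) hroot
      rw [intervalIntegral.integral_undef hni] at hint2
      norm_num at hint2
  refine ⟨by linarith, ?_⟩
  set δ := E * M - Jv with hδdef
  have hδpos : 0 < δ := by linarith
  have hden : ∀ r ∈ Set.Icc ρm ρp, δ ≤ E * chi r - Jv := by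
    intro r hr
    have : E * M ≤ E * chi r := mul_le_mul_of_nonpos_left (hchile r hr) hEneg.le
    linarith
  have hfi : IntervalIntegrable (fun r => (E * chi r - Jv)⁻¹) volume ρm ρp := by
    apply ContinuousOn.intervalIntegrable
    rw [Set.uIcc_of_le h1.le]
    exact (((continuous_const.mul chi_cont).sub continuous_const).continuousOn).inv₀
      fun r hr => ne_of_gt (lt_of_lt_of_le hδpos (hden r hr))
  have hmono := intervalIntegral.integral_mono_on (μ := volume) h1.le hfi
    (intervalIntegrable_const (c := δ⁻¹))
    (fun r hr => by
      have := hden r hr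
      exact inv_anti₀ hδpos this)
  rw [intervalIntegral.integral_const, hint2] at hmono
  have hδinv : δ * δ⁻¹ = 1 := mul_inv_cancel₀ (ne_of_gt hδpos)
  simp only [smul_eq_mul] at hmono
  nlinarith

lemma habs0 : ∀ d e : ℝ, IntervalIntegrable (fun x : ℝ => |x| ^ (-(1/2) : ℝ)) volume d e := by
  have key : ∀ e : ℝ, 0 ≤ e → IntervalIntegrable (fun x : ℝ => |x| ^ (-(1/2) : ℝ)) volume 0 e := by
    intro e he
    refine (intervalIntegral.intervalIntegrable_rpow'
      (by norm_num : (-1:ℝ) < -(1/2))).congr ?_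
    rw [uIoc_of_le he]
    intro x hx
    simp only [abs_of_pos hx.1]
  have key2 : ∀ e : ℝ, IntervalIntegrable (fun x : ℝ => |x| ^ (-(1/2) : ℝ)) volume 0 e := by
    intro e
    rcases le_total 0 e with he | he
    · exact key e he
    · have := (IntervalIntegrable.iff_comp_neg).mp (key (-e) (by linarith))
      simp only [abs_neg, neg_zero, neg_neg] at this
      exact this
  intro d e
  exact (key2 d).symm.trans (key2 e)

lemma habs (a b c : ℝ) : IntervalIntegrable (fun x : ℝ => |x - c| ^ (-(1/2) : ℝ)) volume a b := by
  have := (habs0 (a - c) (b - c)).comp_sub_right c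
  simpa using this

set_option maxHeartbeats 2000000 in
lemma Tbound {ρm ρp E Jv : ℝ} (h0 : 0 < ρm) (h1 : ρm < ρp) (h2 : ρp < 1) (hE : E ≤ -1)
    (hδ1 : 0 < E * chi (max ρm (min (1/2) ρp)) - Jv)
    (hδ2 : E * chi (max ρm (min (1/2) ρp)) - Jv ≤ 1/2) :
    0 ≤ (1/2) * (∫ r in ρm..ρp, (E * chi r)⁻¹ * Real.log (1 - E * chi r / Jv)) ∧
    (1/2) * (∫ r in ρm..ρp, (E * chi r)⁻¹ * Real.log (1 - E * chi r / Jv)) ≤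
      ((2 * (chi (max ρm (min (1/2) ρp)) + 1) ^ ((1:ℝ)/4) / min (chi ρm) (chi ρp)) *
        (∫ r in ρm..ρp, |r - max ρm (min (1/2) ρp)| ^ (-(1/2):ℝ))) * (-E)⁻¹ := by
  set rs := max ρm (min (1/2) ρp) with hrsdef
  set M := chi rs with hMdef
  set m := min (chi ρm) (chi ρp) with hmdef
  set P := -E with hPdef
  have hEP : E = -P := by rw [hPdef]; ring
  set δ := E * M - Jv with hδdef
  have hP1 : 1 ≤ P := by rw [hPdef]; linarith
  have hP0 : 0 < P := lt_of_lt_of_le one_pos hP1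
  have hrsmem : rs ∈ Set.Icc ρm ρp := rstar_mem h1.le
  have hm : 0 < m := by
    rw [hmdef]; apply lt_min <;> unfold chi <;> nlinarith
  have hmM : m ≤ M := chi_min h1.le hrsmem
  have hM0 : 0 < M := lt_of_lt_of_le hm hmM
  have hJv : Jv = -(P*M) - δ := by rw [hδdef, hEP]; ring
  have hJvneg : Jv < 0 := by nlinarith
  have hJvne : Jv ≠ 0 := ne_of_lt hJvneg
  have hcm : ∀ r ∈ Set.Icc ρm ρp, m ≤ chi r := fun r hr => chi_min h1.le hr
  have hcM : ∀ r ∈ Set.Icc ρm ρp, chi r ≤ M := by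
    intro r hr; nlinarith [chi_max h1.le hr]
  have hcpos : ∀ r ∈ Set.Icc ρm ρp, 0 < chi r := fun r hr => lt_of_lt_of_le hm (hcm r hr)
  have hyval : ∀ r ∈ Set.Icc ρm ρp,
      1 - E * chi r / Jv = (δ + P*(M - chi r))/(P*M + δ) := by
    intro r hr
    have hne : P*M + δ ≠ 0 := by positivity
    have hne3 : -(P*M) - δ ≠ 0 := by intro h; apply hne; linarith
    rw [eq_div_iff hne, hEP, hJv]
    field_simp
    ring
  have hypos : ∀ r ∈ Set.Icc ρm ρp, 0 < 1 - E * chi r / Jv := by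
    intro r hr
    rw [hyval r hr]
    have := hcM r hr
    have h5 : 0 < δ + P*(M - chi r) := by nlinarith
    positivity
  have hyle1 : ∀ r ∈ Set.Icc ρm ρp, 1 - E * chi r / Jv ≤ 1 := by
    intro r hr
    rw [hyval r hr]
    rw [div_le_one (by nlinarith [hcM r hr])]
    nlinarith [hcpos r hr]
  have hnonneg : ∀ r ∈ Set.Icc ρm ρp,
      0 ≤ (E * chi r)⁻¹ * Real.log (1 - E * chi r / Jv) := by
    intro r hr
    have h5 : E * chi r < 0 := by nlinarith [hcpos r hr]
    have h6 : (E * chi r)⁻¹ ≤ 0 := inv_nonpos.mpr h5.le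
    have h7 : Real.log (1 - E * chi r / Jv) ≤ 0 :=
      Real.log_nonpos (hypos r hr).le (hyle1 r hr)
    nlinarith [mul_nonneg (neg_nonneg.mpr h6) (neg_nonneg.mpr h7)]
  constructor
  · have := intervalIntegral.integral_nonneg (μ := volume) h1.le hnonneg
    linarith
  have hfint : IntervalIntegrable
      (fun r => (E * chi r)⁻¹ * Real.log (1 - E * chi r / Jv)) volume ρm ρp := by
    apply ContinuousOn.intervalIntegrable
    rw [Set.uIcc_of_le h1.le]
    have hc1 : ContinuousOn (fun r => E * chi r) (Set.Icc ρm ρp) :=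
      (continuous_const.mul chi_cont).continuousOn
    refine ContinuousOn.mul (hc1.inv₀ fun r hr => by nlinarith [hcpos r hr]) ?_
    refine ContinuousOn.log ?_ fun r hr => ne_of_gt (hypos r hr)
    exact continuousOn_const.sub (hc1.div_const Jv)
  set c0 : ℝ := 4 * (M + 1) ^ ((1:ℝ)/4) / m * P⁻¹ with hc0def
  have hgint : IntervalIntegrable (fun r => c0 * |r - rs| ^ (-(1/2):ℝ)) volume ρm ρp :=
    (habs ρm ρp rs).const_mul c0
  have hns : ∀ᵐ r ∂(volume.restrict (Set.Icc ρm ρp)), r ≠ rs := by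
    refine (ae_restrict_of_ae ?_)
    rw [ae_iff]
    have : {a : ℝ | ¬ a ≠ rs} = {rs} := by ext a; simp
    rw [this]
    exact measure_singleton rs
  have hmono : (∫ r in ρm..ρp, (E * chi r)⁻¹ * Real.log (1 - E * chi r / Jv)) ≤
      ∫ r in ρm..ρp, c0 * |r - rs| ^ (-(1/2):ℝ) := by
    refine intervalIntegral.integral_mono_ae_restrict h1.le hfint hgint ?_
    filter_upwards [ae_restrict_mem measurableSet_Icc, hns] with r hr hrne
    set t := r - rs with htdef
    have ht0 : t ≠ 0 := sub_ne_zero.mpr hrne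
    have ht2 : 0 < t^2 := by positivity
    have habst : 0 < |t| := abs_pos.mpr ht0
    set y := 1 - E * chi r / Jv with hy
    set x := y⁻¹ with hx
    have hy0 : 0 < y := hypos r hr
    have hx0 : 0 < x := by positivity
    have hx1 : 1 ≤ x := one_le_inv_iff₀.mpr ⟨hy0, hyle1 r hr⟩
    have hxval : x = (P*M + δ)/(δ + P*(M - chi r)) := by
      rw [hx, hy, hyval r hr, inv_div]
    have hxle : x ≤ (M+1)/t^2 := by
      rw [hxval]
      have hnum : P*M + δ ≤ P*(M+1) := by nlinarith
      have hden : P * t^2 ≤ δ + P*(M - chi r) := by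
        have h8 := chi_max h1.le hr
        rw [← hrsdef, ← hMdef, ← htdef] at h8
        nlinarith
      calc (P*M + δ)/(δ + P*(M - chi r)) ≤ (P*(M+1))/(P*t^2) := by
            apply div_le_div₀ (by positivity) hnum (by positivity) hden
        _ = (M+1)/t^2 := by
            rw [mul_div_mul_left _ _ (ne_of_gt hP0)]
    have hlogx : Real.log x ≤ 4 * x ^ ((1:ℝ)/4) := by
      have h5 := Real.log_le_sub_one_of_pos (Real.rpow_pos_of_pos hx0 ((1:ℝ)/4))
      rw [Real.log_rpow hx0] at h5
      nlinarith [Real.rpow_pos_of_pos hx0 ((1:ℝ)/4)]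
    have hx4 : x ^ ((1:ℝ)/4) ≤ (M+1) ^ ((1:ℝ)/4) * |t| ^ (-(1/2):ℝ) := by
      calc x ^ ((1:ℝ)/4) ≤ ((M+1)/t^2) ^ ((1:ℝ)/4) :=
            Real.rpow_le_rpow hx0.le hxle (by norm_num)
        _ = (M+1) ^ ((1:ℝ)/4) / (t^2) ^ ((1:ℝ)/4) :=
            Real.div_rpow (by positivity) (sq_nonneg t) _
        _ = (M+1) ^ ((1:ℝ)/4) * |t| ^ (-(1/2):ℝ) := by
            rw [div_eq_mul_inv]
            congr 1
            rw [← sq_abs t, ← Real.rpow_natCast |t| 2, ← Real.rpow_mul (abs_nonneg t),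
              ← Real.rpow_neg (abs_nonneg t)]
            norm_num
    have hinteq : (E * chi r)⁻¹ * Real.log y = (P * chi r)⁻¹ * Real.log x := by
      rw [hx, Real.log_inv, hEP]
      have := (hcpos r hr).ne'
      field_simp
    rw [hinteq]
    have hchir := hcpos r hr
    have hlogx0 : 0 ≤ Real.log x := Real.log_nonneg hx1
    have hinvle : (P * chi r)⁻¹ ≤ (P * m)⁻¹ := by
      apply inv_anti₀ (by positivity)
      nlinarith [hcm r hr]
    calc (P * chi r)⁻¹ * Real.log x ≤ (P*m)⁻¹ * (4 * x ^ ((1:ℝ)/4)) := by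
          apply mul_le_mul hinvle (by linarith) hlogx0 (by positivity)
      _ ≤ (P*m)⁻¹ * (4 * ((M+1) ^ ((1:ℝ)/4) * |t| ^ (-(1/2):ℝ))) := by
          apply mul_le_mul_of_nonneg_left _ (by positivity)
          nlinarith [hx4]
      _ = c0 * |t| ^ (-(1/2):ℝ) := by
          rw [hc0def]
          field_simp
  have hIv : (∫ r in ρm..ρp, c0 * |r - rs| ^ (-(1/2):ℝ)) =
      c0 * ∫ r in ρm..ρp, |r - rs| ^ (-(1/2):ℝ) := by
    rw [intervalIntegral.integral_const_mul]
  rw [hIv] at hmono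
  have hIvpos : 0 ≤ ∫ r in ρm..ρp, |r - rs| ^ (-(1/2):ℝ) := by
    apply intervalIntegral.integral_nonneg h1.le
    intro u hu; positivity
  rw [hPdef] at *
  rw [hc0def] at hmono
  set Iv := ∫ r in ρm..ρp, |r - rs| ^ (-(1/2):ℝ)
  have hrw : (2 * (M + 1) ^ ((1:ℝ)/4) / m * Iv) * (-E)⁻¹ * 2 =
      4 * (M + 1) ^ ((1:ℝ)/4) / m * (-E)⁻¹ * Iv := by ring
  linarith [hmono, hrw]

/-- As `E → −∞`, `J_E/E → max_{[ρ₋,ρ₊]} χ` and `A_E − log(−E) → A_a = max_{[ρ₋,ρ₊]} log χ`. -/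
theorem stmt17 (ρm ρp φm φp E0 : ℝ)
    (h0 : 0 < ρm) (h1 : ρm < ρp) (h2 : ρp < 1)
    (hφm : φm = Real.log (ρm / (1 - ρm))) (hφp : φp = Real.log (ρp / (1 - ρp)))
    (hE0 : E0 = (φp - φm) / 2) (J : ℝ → ℝ)
    (hJ : ∀ E : ℝ, E ≤ E0 → J E ≤ 0 ∧ (1/2) * (∫ r in ρm..ρp, (E * chi r - J E)⁻¹) = 1) :
    Filter.Tendsto (fun E => J E / E) Filter.atBot
      (nhds (sSup (chi '' Set.Icc ρm ρp))) ∧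
    Filter.Tendsto
      (fun E => (Real.log (-(J E))
        + (1/2) * ∫ r in ρm..ρp, (E * chi r)⁻¹ * Real.log (1 - E * chi r / J E))
        - Real.log (-E))
      Filter.atBot
      (nhds (sSup ((fun r => Real.log (chi r)) '' Set.Icc ρm ρp))) := by
  set rs := max ρm (min (1/2) ρp) with hrsdef
  set M := chi rs with hMdef
  have hrsmem : rs ∈ Set.Icc ρm ρp := rstar_mem h1.le
  have hm : 0 < min (chi ρm) (chi ρp) := by
    apply lt_min <;> unfold chi <;> nlinarith
  have hM0 : 0 < M := lt_of_lt_of_le hm (chi_min h1.le hrsmem)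
  have hcM : ∀ r ∈ Set.Icc ρm ρp, chi r ≤ M := by
    intro r hr; nlinarith [chi_max h1.le hr]
  have hsup1 : sSup (chi '' Set.Icc ρm ρp) = M := by
    apply IsGreatest.csSup_eq
    exact ⟨⟨rs, hrsmem, rfl⟩, by rintro v ⟨r, hr, rfl⟩; exact hcM r hr⟩
  have hsup2 : sSup ((fun r => Real.log (chi r)) '' Set.Icc ρm ρp) = Real.log M := by
    apply IsGreatest.csSup_eq
    refine ⟨⟨rs, hrsmem, rfl⟩, ?_⟩
    rintro v ⟨r, hr, rfl⟩
    have := lt_of_lt_of_le hm (chi_min h1.le hr)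
    exact Real.log_le_log this (hcM r hr)
  set E1 := min E0 (-1 : ℝ) with hE1def
  have hKey : ∀ E : ℝ, E ≤ E1 → 0 < E * M - J E ∧ E * M - J E ≤ 1/2 := by
    intro E hEle
    obtain ⟨hj1, hj2⟩ := hJ E (le_trans hEle (min_le_left _ _))
    have hEm1 : E ≤ -1 := le_trans hEle (min_le_right _ _)
    obtain ⟨ha, hb⟩ := keybound h0 h1 h2 hEm1 hj2
    exact ⟨ha, le_trans hb (by linarith)⟩
  -- Part 1
  have hT1 : Filter.Tendsto (fun E => J E / E) Filter.atBot (nhds M) := by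
    have hh : Filter.Tendsto (fun E : ℝ => M + (1/2) * (-E)⁻¹) Filter.atBot (nhds M) := by
      have hinv : Filter.Tendsto (fun E : ℝ => (-E)⁻¹) Filter.atBot (nhds 0) :=
        tendsto_inv_atTop_zero.comp tendsto_neg_atBot_atTop
      have := (tendsto_const_nhds (x := M) (f := Filter.atBot (α := ℝ))).add
        (hinv.const_mul (1/2))
      simpa using this
    apply tendsto_of_tendsto_of_tendsto_of_le_of_le' tendsto_const_nhds hh
    · filter_upwards [eventually_le_atBot E1] with E hEle
      have hEneg : E < 0 := lt_of_le_of_lt (le_trans hEle (min_le_right _ _)) (by norm_num)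
      obtain ⟨ha, hb⟩ := hKey E hEle
      rw [le_div_iff_of_neg hEneg]
      linarith
    · filter_upwards [eventually_le_atBot E1] with E hEle
      have hEneg : E < 0 := lt_of_le_of_lt (le_trans hEle (min_le_right _ _)) (by norm_num)
      obtain ⟨ha, hb⟩ := hKey E hEle
      rw [div_le_iff_of_neg hEneg]
      have hinv : (M + 1/2 * (-E)⁻¹) * E = M * E - 1/2 := by
        have h9 : (-E)⁻¹ * (-E) = 1 := inv_mul_cancel₀ (by linarith)
        linear_combination (-(1:ℝ)/2) * h9
      linarith [hinv.le, hinv.ge]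
  constructor
  · rw [hsup1]; exact hT1
  -- Part 2
  rw [hsup2]
  have hTlog : Filter.Tendsto (fun E => Real.log (J E / E)) Filter.atBot (nhds (Real.log M)) :=
    ((Real.continuousAt_log (ne_of_gt hM0)).tendsto).comp hT1
  set K := (2 * (M + 1) ^ ((1:ℝ)/4) / min (chi ρm) (chi ρp)) *
      (∫ r in ρm..ρp, |r - rs| ^ (-(1/2):ℝ)) with hKdef
  have hT0 : Filter.Tendsto
      (fun E => (1/2) * ∫ r in ρm..ρp, (E * chi r)⁻¹ * Real.log (1 - E * chi r / J E))
      Filter.atBot (nhds 0) := by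
    apply squeeze_zero'
    · filter_upwards [eventually_le_atBot E1] with E hEle
      have hEm1 : E ≤ -1 := le_trans hEle (min_le_right _ _)
      obtain ⟨ha, hb⟩ := hKey E hEle
      exact (Tbound h0 h1 h2 hEm1 ha hb).1
    · filter_upwards [eventually_le_atBot E1] with E hEle
      have hEm1 : E ≤ -1 := le_trans hEle (min_le_right _ _)
      obtain ⟨ha, hb⟩ := hKey E hEle
      exact (Tbound h0 h1 h2 hEm1 ha hb).2
    · have hinv : Filter.Tendsto (fun E : ℝ => (-E)⁻¹) Filter.atBot (nhds 0) :=
        tendsto_inv_atTop_zero.comp tendsto_neg_atBot_atTop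
      have h9 := hinv.const_mul K
      rw [mul_zero] at h9
      exact h9
  have hfinal := hTlog.add hT0
  rw [add_zero] at hfinal
  apply hfinal.congr'
  filter_upwards [eventually_le_atBot E1] with E hEle
  have hEneg : E < 0 := lt_of_le_of_lt (le_trans hEle (min_le_right _ _)) (by norm_num)
  obtain ⟨ha, hb⟩ := hKey E hEle
  have hJneg : J E < 0 := by nlinarith
  have hlogdiv : Real.log (J E / E) = Real.log (-(J E)) - Real.log (-E) := by
    rw [← neg_div_neg_eq, Real.log_div (by linarith) (by linarith)]
  rw [hlogdiv]
  ring
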